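/- Let G be a prime graph and S a proper subset of V(G). Then S is t-convex if and only if S is a clique and every vertex outside S has at most one neighbour in S. -/

import Mathlib

open Set

variable {V : Type*}

/-- `p` is a triangle path: a path with no edge joining vertices at index
distance greater than 2 along the path. -/
def TPath (G : SimpleGraph V) {u v : V} (p : G.Walk u v) : Prop :=
  p.IsPath ∧ ∀ i j : ℕ, i + 2 < j →
    ∀ (hi : i < p.support.length) (hj : j < p.support.length),
      ¬ G.Adj (p.support.get ⟨i, hi⟩) (p.support.get ⟨j, hj⟩)

/-- `p` is a monophonic (induced) path: a path with no edge joining vertices at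
index distance greater than 1 along the path. -/
def MPath (G : SimpleGraph V) {u v : V} (p : G.Walk u v) : Prop :=
  p.IsPath ∧ ∀ i j : ℕ, i + 1 < j →
    ∀ (hi : i < p.support.length) (hj : j < p.support.length),
      ¬ G.Adj (p.support.get ⟨i, hi⟩) (p.support.get ⟨j, hj⟩)

/-- `p` is a geodesic (shortest path). -/
def GPath (G : SimpleGraph V) {u v : V} (p : G.Walk u v) : Prop :=
  p.IsPath ∧ ∀ q : G.Walk u v, p.length ≤ q.length

/-- `S` is convex in the triangle path convexity. -/
def TConvex (G : SimpleGraph V) (S : Set V) : Prop :=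
  ∀ ⦃u v : V⦄, u ∈ S → v ∈ S → ∀ p : G.Walk u v, TPath G p → ∀ w ∈ p.support, w ∈ S

/-- `S` is convex in the monophonic convexity. -/
def MConvex (G : SimpleGraph V) (S : Set V) : Prop :=
  ∀ ⦃u v : V⦄, u ∈ S → v ∈ S → ∀ p : G.Walk u v, MPath G p → ∀ w ∈ p.support, w ∈ S

/-- `S` is convex in the geodetic convexity. -/
def GConvex (G : SimpleGraph V) (S : Set V) : Prop :=
  ∀ ⦃u v : V⦄, u ∈ S → v ∈ S → ∀ p : G.Walk u v, GPath G p → ∀ w ∈ p.support, w ∈ S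

/-- `S` is `P₃`-convex: no vertex outside `S` has two neighbours in `S`. -/
def P3Convex (G : SimpleGraph V) (S : Set V) : Prop :=
  ∀ w ∉ S, ∀ a ∈ S, ∀ b ∈ S, G.Adj w a → G.Adj w b → a = b

/-- The triangle path interval of `S`. -/
def TInterval (G : SimpleGraph V) (S : Set V) : Set V :=
  S ∪ {w | ∃ u ∈ S, ∃ v ∈ S, ∃ p : G.Walk u v, TPath G p ∧ w ∈ p.support}

/-- The monophonic interval of `S`. -/
def MInterval (G : SimpleGraph V) (S : Set V) : Set V :=
  S ∪ {w | ∃ u ∈ S, ∃ v ∈ S, ∃ p : G.Walk u v, MPath G p ∧ w ∈ p.support}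

/-- The geodetic interval of `S`. -/
def GInterval (G : SimpleGraph V) (S : Set V) : Set V :=
  S ∪ {w | ∃ u ∈ S, ∃ v ∈ S, ∃ p : G.Walk u v, GPath G p ∧ w ∈ p.support}

/-- The `P₃`-interval of `S`: `S` together with the vertices having at least two
neighbours in `S`. -/
def P3Interval (G : SimpleGraph V) (S : Set V) : Set V :=
  S ∪ {w | w ∉ S ∧ ∃ a ∈ S, ∃ b ∈ S, a ≠ b ∧ G.Adj w a ∧ G.Adj w b}

/-- The convex hull of `S` in the triangle path convexity. -/
def THull (G : SimpleGraph V) (S : Set V) : Set V :=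
  ⋂₀ {C : Set V | S ⊆ C ∧ TConvex G C}

/-- The convex hull of `S` in the monophonic convexity. -/
def MHull (G : SimpleGraph V) (S : Set V) : Set V :=
  ⋂₀ {C : Set V | S ⊆ C ∧ MConvex G C}

/-- The convex hull of `S` in the geodetic convexity. -/
def GHull (G : SimpleGraph V) (S : Set V) : Set V :=
  ⋂₀ {C : Set V | S ⊆ C ∧ GConvex G C}

/-- `K` separates the vertices `a` and `b`: both lie outside `K` and every walk
between them meets `K`. -/
def Separates (G : SimpleGraph V) (K : Set V) (a b : V) : Prop :=
  a ∉ K ∧ b ∉ K ∧ ∀ p : G.Walk a b, ∃ w ∈ p.support, w ∈ K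

/-- `K` is a separator of `G`. -/
def IsSeparator (G : SimpleGraph V) (K : Set V) : Prop :=
  ∃ a b : V, Separates G K a b

/-- `G` is prime: it has no clique separator. -/
def IsPrime (G : SimpleGraph V) : Prop :=
  ¬ ∃ C : Set V, G.IsClique C ∧ IsSeparator G C

/-- `K` is a minimal separator for `a` and `b`. -/
def IsMinSeparator (G : SimpleGraph V) (K : Set V) (a b : V) : Prop :=
  Separates G K a b ∧ ∀ K' : Set V, K' ⊂ K → ¬ Separates G K' a b

/-- `W` induces a maximal prime subgraph of `G`. -/
def IsMPSubgraph (G : SimpleGraph V) (W : Set V) : Prop :=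
  IsPrime (G.induce W) ∧ ∀ W' : Set V, W ⊆ W' → IsPrime (G.induce W') → W' = W

/-- `C` is the vertex set of a connected component of `G - S`. -/
def IsCompOf (G : SimpleGraph V) (S C : Set V) : Prop :=
  C.Nonempty ∧ C ∩ S = ∅ ∧
  (∀ x ∈ C, ∀ y ∈ C, ∃ p : G.Walk x y, ∀ w ∈ p.support, w ∈ C) ∧
  (∀ x ∈ C, ∀ y : V, y ∉ S → G.Adj x y → y ∈ C)
section Helpers

variable {V : Type*} {G : SimpleGraph V}

open SimpleGraph Walk

lemma myLengthDrop {u v : V} (p : G.Walk u v) (n : ℕ) :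
    (p.drop n).length = p.length - n := by
  induction p generalizing n with
  | nil => cases n <;> simp [SimpleGraph.Walk.drop]
  | cons h q ih =>
    cases n with
    | zero => simp [SimpleGraph.Walk.drop]
    | succ n => simp [SimpleGraph.Walk.drop, ih]

lemma mySupportDrop {u v : V} (p : G.Walk u v) (n : ℕ) :
    ∀ w ∈ (p.drop n).support, w ∈ p.support := by
  induction p generalizing n with
  | nil => intro w hw; cases n <;> simpa [SimpleGraph.Walk.drop] using hw
  | cons h q ih =>
    intro w hw
    cases n with
    | zero => simpa [SimpleGraph.Walk.drop] using hw
    | succ n =>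
      simp only [SimpleGraph.Walk.drop, support_copy] at hw
      simp only [support_cons, List.mem_cons]
      exact Or.inr (ih n w hw)

lemma myShortcut {x y : V} (p : G.Walk x y) :
    ∀ i j : ℕ, i < j → j ≤ p.length → G.Adj (p.getVert i) (p.getVert j) →
      ∃ p' : G.Walk x y, p'.length + j ≤ p.length + i + 1 ∧
        ∀ w ∈ p'.support, w ∈ p.support := by
  induction p with
  | nil =>
    intro i j hij hj _
    simp only [Walk.length_nil] at hj
    exact absurd hij (by omega)
  | cons h q ih =>
    intro i j hij hj hadj
    cases i with
    | zero =>
      refine ⟨Walk.cons (v := (Walk.cons h q).getVert j)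
        (by simpa using hadj) ((Walk.cons h q).drop j), ?_, ?_⟩
      · have := myLengthDrop (Walk.cons h q) j
        simp only [Walk.length_cons] at *
        omega
      · intro w hw
        simp only [Walk.support_cons, List.mem_cons] at hw ⊢
        rcases hw with rfl | hw
        · exact Or.inl rfl
        · have := mySupportDrop (Walk.cons h q) j w hw
          simpa using this
    | succ k =>
      cases j with
      | zero => omega
      | succ l =>
        have hadj' : G.Adj (q.getVert k) (q.getVert l) := hadj
        have hl : l ≤ q.length := by simpa [Walk.length_cons] using hj
        obtain ⟨q', hq'len, hq'sub⟩ := ih k l (by omega) hl hadj'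
        refine ⟨Walk.cons h q', ?_, ?_⟩
        · simp only [Walk.length_cons]; omega
        · intro w hw
          simp only [Walk.support_cons, List.mem_cons] at hw ⊢
          rcases hw with rfl | hw
          · exact Or.inl rfl
          · exact Or.inr (hq'sub w hw)

lemma mySupportGet {u v : V} (p : G.Walk u v) (i : ℕ) (hi : i < p.support.length) :
    p.support.get ⟨i, hi⟩ = p.getVert i := by
  induction p generalizing i with
  | nil =>
    simp only [Walk.support_nil, List.length_singleton] at hi
    have : i = 0 := by omega
    subst this
    rfl
  | cons h q ih =>
    cases i with
    | zero => rfl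
    | succ i =>
      have hi' : i < q.support.length := by
        simpa [Walk.support_cons] using hi
      have := ih i hi'
      simp only [List.get_eq_getElem] at this ⊢
      simpa [Walk.support_cons, Walk.getVert_cons_succ] using this

lemma myPathGetVertInj {x y : V} {p : G.Walk x y} (hp : p.IsPath) {i j : ℕ}
    (hi : i ≤ p.length) (hj : j ≤ p.length) (h : p.getVert i = p.getVert j) : i = j := by
  have hi' : i < p.support.length := by rw [Walk.length_support]; omega
  have hj' : j < p.support.length := by rw [Walk.length_support]; omega
  have hget : p.support.get ⟨i, hi'⟩ = p.support.get ⟨j, hj'⟩ := by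
    rw [mySupportGet, mySupportGet]; exact h
  have := (List.Nodup.get_inj_iff hp.support_nodup).mp hget
  exact congrArg Fin.val this

/-- Every walk contains, support-wise, an induced path with the same endpoints. -/
lemma myExistsMin {x y : V} (q : G.Walk x y) :
    ∃ p : G.Walk x y, p.IsPath ∧
      (∀ i j : ℕ, i < j → j ≤ p.length → j ≠ i + 1 → ¬ G.Adj (p.getVert i) (p.getVert j)) ∧
      ∀ w ∈ p.support, w ∈ q.support := by
  classical
  let L : Set ℕ := {n | ∃ p : G.Walk x y, p.IsPath ∧ p.length = n ∧
    ∀ w ∈ p.support, w ∈ q.support}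
  have hL : L.Nonempty :=
    ⟨q.bypass.length, q.bypass, q.bypass_isPath, rfl, fun w hw => q.support_bypass_subset hw⟩
  obtain ⟨p, hp, hlen, hsub⟩ := Nat.sInf_mem hL
  refine ⟨p, hp, ?_, hsub⟩
  intro i j hij hj hne hadj
  obtain ⟨p', hlt, hsub'⟩ := myShortcut p i j hij hj hadj
  have hmem : p'.bypass.length ∈ L :=
    ⟨p'.bypass, p'.bypass_isPath, rfl,
      fun w hw => hsub _ (hsub' _ (p'.support_bypass_subset hw))⟩
  have h1 := Nat.sInf_le hmem
  have h2 : p'.bypass.length ≤ p'.length := p'.length_bypass_le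
  omega

/-- For nonadjacent distinct endpoints, every connecting walk contains a triangle path
with an interior vertex. -/
lemma myExistsTPath {x y : V} (hne : x ≠ y) (hnadj : ¬ G.Adj x y) (q : G.Walk x y) :
    ∃ p : G.Walk x y, TPath G p ∧ (∀ w ∈ p.support, w ∈ q.support) ∧
      ∃ m ∈ p.support, m ≠ x ∧ m ≠ y := by
  obtain ⟨p, hp, hcond, hsub⟩ := myExistsMin q
  have hlen2 : 2 ≤ p.length := by
    rcases Nat.lt_or_ge p.length 2 with h | h
    · interval_cases hpl : p.length
      · have h0 : p.getVert p.length = y := p.getVert_length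
        rw [hpl] at h0
        exact absurd ((p.getVert_zero).symm.trans h0) hne
      · have hadj01 := p.adj_getVert_succ (i := 0) (by omega)
        rw [p.getVert_zero] at hadj01
        have h1 : p.getVert p.length = y := p.getVert_length
        rw [hpl] at h1
        rw [h1] at hadj01
        exact absurd hadj01 hnadj
    · exact h
  refine ⟨p, ⟨hp, ?_⟩, hsub, p.getVert 1, ?_, ?_, ?_⟩
  · intro i j hij hi hj
    rw [mySupportGet, mySupportGet]
    have hj' : j ≤ p.length := by rw [Walk.length_support] at hj; omega
    exact hcond i j (by omega) hj' (by omega)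
  · exact Walk.mem_support_iff_exists_getVert.mpr ⟨1, rfl, by omega⟩
  · intro h
    have : (1 : ℕ) = 0 := myPathGetVertInj hp (by omega) (by omega)
      (by rw [p.getVert_zero]; exact h)
    omega
  · intro h
    have : (1 : ℕ) = p.length := myPathGetVertInj hp (by omega) (le_refl _)
      (by rw [p.getVert_length]; exact h)
    omega

end Helpers
theorem stmt_7 [Fintype V] (G : SimpleGraph V) (hconn : G.Connected)
    (hprime : IsPrime G) (S : Set V) (hproper : S ≠ Set.univ) :
    TConvex G S ↔
      G.IsClique S ∧ ∀ w ∉ S, ∀ a ∈ S, ∀ b ∈ S, G.Adj w a → G.Adj w b → a = b := by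
  classical
  constructor
  · intro hT
    have hP3 : ∀ w ∉ S, ∀ a ∈ S, ∀ b ∈ S, G.Adj w a → G.Adj w b → a = b := by
      intro w hw a ha b hb hwa hwb
      by_contra hne
      set p : G.Walk a b := SimpleGraph.Walk.cons hwa.symm
        (SimpleGraph.Walk.cons hwb SimpleGraph.Walk.nil) with hpdef
      have hpath : p.IsPath := by
        rw [SimpleGraph.Walk.isPath_def]
        simp only [hpdef, SimpleGraph.Walk.support_cons, SimpleGraph.Walk.support_nil]
        refine List.nodup_cons.mpr ⟨?_, List.nodup_cons.mpr ⟨?_, List.nodup_singleton _⟩⟩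
        · simp only [List.mem_cons, List.mem_singleton, List.not_mem_nil, or_false, not_or]
          exact ⟨fun h => (G.ne_of_adj hwa) h.symm, hne⟩
        · simp only [List.mem_cons, List.mem_singleton, List.not_mem_nil, or_false]
          exact G.ne_of_adj hwb
      have htp : TPath G p := by
        refine ⟨hpath, ?_⟩
        intro i j hij hi hj
        have hlen : p.support.length = 3 := rfl
        omega
      have := hT ha hb p htp w (by simp [hpdef])
      exact hw this
    refine ⟨?_, hP3⟩
    rw [SimpleGraph.isClique_iff]
    intro x hx y hy hxy
    by_contra hnadj
    obtain ⟨v₀, hv₀⟩ := (Set.ne_univ_iff_exists_notMem S).mp hproper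
    set C : Set V := {c | ∃ p : G.Walk v₀ c, ∀ w ∈ p.support, w ∉ S} with hC
    have hv₀C : v₀ ∈ C := ⟨SimpleGraph.Walk.nil, by simpa using hv₀⟩
    have hCS : ∀ c ∈ C, c ∉ S := by
      rintro c ⟨p, hp⟩
      exact hp c p.end_mem_support
    set K : Set V := {s | s ∈ S ∧ ∃ c ∈ C, G.Adj s c} with hK
    have hKS : K ⊆ S := fun s hs => hs.1
    have hKclique : G.IsClique K := by
      rw [SimpleGraph.isClique_iff]
      rintro k₁ ⟨hk₁S, c₁, hc₁, hadj₁⟩ k₂ ⟨hk₂S, c₂, hc₂, hadj₂⟩ hkne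
      by_contra hknadj
      obtain ⟨p₁, hp₁⟩ := hc₁
      obtain ⟨p₂, hp₂⟩ := hc₂
      set q : G.Walk k₁ k₂ :=
        SimpleGraph.Walk.cons hadj₁ (p₁.reverse.append
          (p₂.append (SimpleGraph.Walk.cons hadj₂.symm SimpleGraph.Walk.nil))) with hq
      have hqsupp : ∀ w ∈ q.support, w = k₁ ∨ w = k₂ ∨ w ∉ S := by
        intro w hw
        simp only [hq, SimpleGraph.Walk.support_cons, List.mem_cons,
          SimpleGraph.Walk.mem_support_append_iff, SimpleGraph.Walk.support_reverse,
          List.mem_reverse, SimpleGraph.Walk.support_nil, List.mem_singleton,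
          List.not_mem_nil, or_false] at hw
        rcases hw with rfl | hw | hw | hw
        · exact Or.inl rfl
        · exact Or.inr (Or.inr (hp₁ w hw))
        · exact Or.inr (Or.inr (hp₂ w hw))
        · rcases hw with rfl | rfl
          · exact Or.inr (Or.inr (hCS _ ⟨p₂, hp₂⟩))
          · exact Or.inr (Or.inl rfl)
      obtain ⟨p, htp, hsub, m, hm, hm1, hm2⟩ := myExistsTPath hkne hknadj q
      have hmS := hT hk₁S hk₂S p htp m hm
      rcases hqsupp m (hsub m hm) with h | h | h
      · exact hm1 h
      · exact hm2 h
      · exact h hmS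
    have hext : ∀ {a b : V} (p : G.Walk a b), a ∈ C → (∀ w ∈ p.support, w ∉ K) → b ∈ C := by
      intro a b p
      induction p with
      | nil => exact fun h _ => h
      | @cons a' m b' hadj q ih =>
        intro ha hKfree
        have hmK : m ∉ K := hKfree m (by simp [SimpleGraph.Walk.support_cons])
        have hmC : m ∈ C := by
          by_cases hmS : m ∈ S
          · exact absurd ⟨hmS, a', ha, hadj.symm⟩ hmK
          · obtain ⟨pa, hpa⟩ := ha
            refine ⟨pa.append (SimpleGraph.Walk.cons hadj SimpleGraph.Walk.nil), ?_⟩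
            intro w hw
            rw [SimpleGraph.Walk.mem_support_append_iff] at hw
            rcases hw with hw | hw
            · exact hpa w hw
            · simp only [SimpleGraph.Walk.support_cons, SimpleGraph.Walk.support_nil,
                List.mem_cons] at hw
              rcases hw with rfl | rfl | h
              · exact hpa w pa.end_mem_support
              · exact hmS
              · exact absurd h (List.not_mem_nil (a := w))
        exact ih hmC (fun w hw => hKfree w (by
          simp only [SimpleGraph.Walk.support_cons, List.mem_cons]
          exact Or.inr hw))
    have hxyK : x ∉ K ∨ y ∉ K := by
      by_contra h
      push_neg at h
      exact hnadj (hKclique h.1 h.2 hxy)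
    have hfin : ∀ z : V, z ∈ S → z ∉ K → False := by
      intro z hzS hzK
      refine hprime ⟨K, hKclique, v₀, z, fun h => hv₀ (hKS h), hzK, ?_⟩
      intro p
      by_contra hcon
      push_neg at hcon
      exact hCS z (hext p hv₀C hcon) hzS
    rcases hxyK with h | h
    · exact hfin x hx h
    · exact hfin y hy h
  · rintro ⟨hclq, hp3⟩
    intro u v hu hv p hp w hw
    rcases eq_or_ne u v with rfl | huv
    · have : p = SimpleGraph.Walk.nil := SimpleGraph.Walk.isPath_iff_eq_nil.mp hp.1
      subst this
      simp only [SimpleGraph.Walk.support_nil, List.mem_singleton] at hw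
      subst hw
      exact hu
    · have hadj : G.Adj u v := hclq hu hv huv
      have hlen : p.length ≤ 2 := by
        by_contra hgt
        push_neg at hgt
        have h0 : (0:ℕ) < p.support.length := by rw [SimpleGraph.Walk.length_support]; omega
        have hL : p.length < p.support.length := by
          rw [SimpleGraph.Walk.length_support]; omega
        have := hp.2 0 p.length (by omega) h0 hL
        rw [mySupportGet, mySupportGet, p.getVert_zero, p.getVert_length] at this
        exact this hadj
      obtain ⟨n, hgv, hn⟩ := SimpleGraph.Walk.mem_support_iff_exists_getVert.mp hw
      rcases Nat.eq_zero_or_pos n with rfl | hn0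
      · rw [p.getVert_zero] at hgv
        exact hgv ▸ hu
      rcases eq_or_lt_of_le hn with rfl | hnlt
      · rw [p.getVert_length] at hgv
        exact hgv ▸ hv
      have hn1 : n = 1 := by omega
      have hl2 : p.length = 2 := by omega
      subst hn1
      have hadjuw : G.Adj u (p.getVert 1) := by
        have := p.adj_getVert_succ (i := 0) (by omega)
        rwa [p.getVert_zero] at this
      have hadjwv : G.Adj (p.getVert 1) v := by
        have := p.adj_getVert_succ (i := 1) (by omega)
        have h2 : p.getVert 2 = v := by
          have := p.getVert_length
          rwa [hl2] at this
        rwa [h2] at this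
      rw [hgv] at hadjuw hadjwv
      by_contra hwS
      exact huv (hp3 w hwS u hu v hv hadjuw.symm hadjwv)
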